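/- $QA_{\varphi,\psi}=L^\infty$ if and only if $\varphi(0_+)\ne 0$. Precisely: there exists a constant $K>0$ such that $\|f\|_\infty\le K\,\|f\|_{\varphi,\psi}$ for every $f\in QA_{\varphi,\psi}$ (equivalently, $QA_{\varphi,\psi}\subseteq L^\infty[0,1]$ with equivalent norms, since $\|f\|_{\varphi,\psi}\le\varphi(1)\psi(1)\|f\|_\infty$ always holds) if and only if $\lim_{t\to 0_+}\varphi(t)>0$. -/

import Mathlib

open MeasureTheory ENNReal Set Filter Topology

noncomputable section

/-- Lebesgue measure restricted to the interval `[0,1]`. -/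
def μ01 : Measure ℝ := volume.restrict (Set.Icc 0 1)

/-- `φ : [0,1] → [0,∞)` is concave, non-decreasing, and vanishes only at the origin. -/
structure IsPhi (φ : ℝ → ℝ) : Prop where
  concave : ConcaveOn ℝ (Set.Icc 0 1) φ
  mono : MonotoneOn φ (Set.Icc 0 1)
  zero : φ 0 = 0
  pos : ∀ t : ℝ, 0 < t → t ≤ 1 → 0 < φ t

/-- `ψ : [0,∞) → [0,∞)` is concave, non-decreasing, and vanishes only at the origin. -/
structure IsPsi (ψ : ℝ → ℝ) : Prop where
  concave : ConcaveOn ℝ (Set.Ici 0) ψ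
  mono : MonotoneOn ψ (Set.Ici 0)
  zero : ψ 0 = 0
  pos : ∀ t : ℝ, 0 < t → 0 < ψ t

/-- A sequence `g` of nonnegative `L^∞` functions with `|f| ≤ ∑ₙ gₙ` a.e. -/
def Admissible (f : ℝ → ℝ) (g : ℕ → ℝ → ℝ) : Prop :=
  (∀ n, AEMeasurable (g n) μ01) ∧
  (∀ n, eLpNorm (g n) ⊤ μ01 < ⊤) ∧
  (∀ n x, 0 ≤ g n x) ∧
  (∀ᵐ x ∂μ01, ENNReal.ofReal |f x| ≤ ∑' n : ℕ, ENNReal.ofReal (g n x))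

/-- The cost `∑ₙ ψ(n) ‖gₙ‖_∞ φ(‖gₙ‖₁/‖gₙ‖_∞)` of a decomposition (index shifted by 1;
`0/0 = 0` by the `ℝ≥0∞` division convention, and `φ 0 = 0`). -/
def seqCost (φ ψ : ℝ → ℝ) (g : ℕ → ℝ → ℝ) : ℝ≥0∞ :=
  ∑' n : ℕ, ENNReal.ofReal
    (ψ ((n : ℝ) + 1) * (eLpNorm (g n) ⊤ μ01).toReal *
      φ ((eLpNorm (g n) 1 μ01 / eLpNorm (g n) ⊤ μ01).toReal))

/-- The quasi-norm `‖f‖_{φ,ψ}` (equal to `∞` when no admissible decomposition exists). -/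
def QANorm (φ ψ : ℝ → ℝ) (f : ℝ → ℝ) : ℝ≥0∞ :=
  ⨅ (g : ℕ → ℝ → ℝ) (_ : Admissible f g), seqCost φ ψ g

/-- Membership in the space `QA_{φ,ψ}`. -/
def MemQA (φ ψ : ℝ → ℝ) (f : ℝ → ℝ) : Prop :=
  AEMeasurable f μ01 ∧ QANorm φ ψ f < ⊤

/-- The decreasing rearrangement `f*` of `f` on `[0,1]`. -/
def decRearr (f : ℝ → ℝ) (t : ℝ) : ℝ :=
  sInf {s : ℝ | 0 ≤ s ∧ μ01 {x | s < |f x|} ≤ ENNReal.ofReal t}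

/-- The limit `ζ(0⁺)` of a non-decreasing function `ζ` on `[0,1]`. -/
def limZero (ζ : ℝ → ℝ) : ℝ := sInf (ζ '' Set.Ioc 0 1)

/-- The Lorentz norm `‖f‖_{Λ_ζ} = ∫₀¹ f* dζ = ‖f‖_∞ ζ(0⁺) + ∫₀¹ f*(s) ζ'(s) ds`
(for `ζ` concave the derivative exists a.e. and `ζ` is absolutely continuous on `(0,1]`). -/
def lorentzNorm (ζ : ℝ → ℝ) (f : ℝ → ℝ) : ℝ≥0∞ :=
  eLpNorm f ⊤ μ01 * ENNReal.ofReal (limZero ζ) +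
    ∫⁻ s in Set.Ioc (0:ℝ) 1, ENNReal.ofReal (decRearr f s * deriv ζ s)

/-- Membership in the Lorentz space `Λ_ζ`. -/
def MemLorentz (ζ : ℝ → ℝ) (f : ℝ → ℝ) : Prop :=
  AEMeasurable f μ01 ∧ lorentzNorm ζ f < ⊤

/-- The quasi-concave function `φ_s(t) = inf_n max{sₙ,t} (φ(sₙ)/sₙ) ψ(n)` (index shifted by 1). -/
def phiSeq (φ ψ : ℝ → ℝ) (s : ℕ → ℝ) (t : ℝ) : ℝ :=
  if t = 0 then 0 else ⨅ n : ℕ, max (s n) t * (φ (s n) / s n) * ψ ((n : ℝ) + 1)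

/-- The function `τ(t) = φ(t) ψ(logbar(φ(t)/t))` with `logbar t = 1 + log⁺ t`. -/
def tauF (φ ψ : ℝ → ℝ) (t : ℝ) : ℝ :=
  if t = 0 then 0 else φ t * ψ (1 + max (Real.log (φ t / t)) 0)

lemma mu01_univ : μ01 Set.univ = 1 := by
  simp [μ01, Real.volume_Icc]

instance : IsProbabilityMeasure μ01 := ⟨mu01_univ⟩

lemma mu01_Icc {t : ℝ} (ht : 0 < t) (ht1 : t ≤ 1) : μ01 (Set.Icc 0 t) = ENNReal.ofReal t := by
  rw [μ01, Measure.restrict_apply measurableSet_Icc,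
    Set.inter_eq_left.2 (Set.Icc_subset_Icc le_rfl ht1), Real.volume_Icc, sub_zero]

lemma cost_lower {φ ψ : ℝ → ℝ} (hφ : IsPhi φ) (hψ : IsPsi ψ) {a : ℝ} (ha : 0 < a)
    (haφ : ∀ t : ℝ, 0 < t → t ≤ 1 → a ≤ φ t) (f : ℝ → ℝ) (g : ℕ → ℝ → ℝ)
    (hg : Admissible f g) :
    ENNReal.ofReal (a * ψ 1) * eLpNorm f ⊤ μ01 ≤ seqCost φ ψ g := by
  obtain ⟨hmeas, hfin, hpos, hae⟩ := hg
  have hψ1 : 0 < ψ 1 := hψ.pos 1 one_pos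
  -- step 1: ‖f‖_∞ ≤ ∑' n, ‖g n‖_∞
  have h1 : eLpNorm f ⊤ μ01 ≤ ∑' n : ℕ, eLpNorm (g n) ⊤ μ01 := by
    rw [eLpNorm_exponent_top]
    apply essSup_le_of_ae_le (hfbdd := by isBoundedDefault)
    have hall : ∀ᵐ x ∂μ01, ∀ n : ℕ, (‖g n x‖₊ : ℝ≥0∞) ≤ eLpNormEssSup (g n) μ01 :=
      ae_all_iff.2 fun n => ae_le_eLpNormEssSup
    filter_upwards [hall, hae] with x hx hfx
    calc (‖f x‖₊ : ℝ≥0∞) = ENNReal.ofReal |f x| := by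
          exact Real.enorm_eq_ofReal_abs _
      _ ≤ ∑' n : ℕ, ENNReal.ofReal (g n x) := hfx
      _ ≤ ∑' n : ℕ, eLpNormEssSup (g n) μ01 := by
          apply ENNReal.tsum_le_tsum
          intro n
          calc ENNReal.ofReal (g n x) = (‖g n x‖₊ : ℝ≥0∞) :=
                (Real.enorm_eq_ofReal (hpos n x)).symm
            _ ≤ eLpNormEssSup (g n) μ01 := hx n
      _ = ∑' n : ℕ, eLpNorm (g n) ⊤ μ01 := by simp [eLpNorm_exponent_top]
  -- step 2: termwise bound
  have h2 : ∀ n : ℕ, ENNReal.ofReal (a * ψ 1) * eLpNorm (g n) ⊤ μ01 ≤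
      ENNReal.ofReal (ψ ((n : ℝ) + 1) * (eLpNorm (g n) ⊤ μ01).toReal *
        φ ((eLpNorm (g n) 1 μ01 / eLpNorm (g n) ⊤ μ01).toReal)) := by
    intro n
    set M := eLpNorm (g n) ⊤ μ01 with hM
    set L := eLpNorm (g n) 1 μ01 with hL
    have hMne : M ≠ ⊤ := (hfin n).ne
    by_cases hM0 : M = 0
    · simp [hM0]
    · have hL0 : L ≠ 0 := by
        intro h0
        apply hM0
        have hz : g n =ᵐ[μ01] 0 :=
          (eLpNorm_eq_zero_iff (hmeas n).aestronglyMeasurable one_ne_zero).1 h0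
        rw [hM, eLpNorm_congr_ae hz, eLpNorm_zero]
      have hLM : L ≤ M := eLpNorm_le_eLpNorm_of_exponent_le le_top (hmeas n).aestronglyMeasurable
      have hdiv1 : L / M ≤ 1 := ENNReal.div_le_of_le_mul (by simpa using hLM)
      set r := (L / M).toReal with hr
      have hrpos : 0 < r :=
        ENNReal.toReal_pos (ENNReal.div_ne_zero.2 ⟨hL0, hMne⟩) (ne_top_of_le_ne_top one_ne_top hdiv1)
      have hr1 : r ≤ 1 := by
        have h := ENNReal.toReal_mono one_ne_top hdiv1
        rwa [ENNReal.toReal_one] at h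
      have haφr : a ≤ φ r := haφ r hrpos hr1
      have hψn : ψ 1 ≤ ψ ((n : ℝ) + 1) := by
        apply hψ.mono (Set.mem_Ici.2 zero_le_one) (Set.mem_Ici.2 (by positivity))
        have : (0:ℝ) ≤ n := Nat.cast_nonneg n
        linarith
      have hMt : 0 ≤ M.toReal := ENNReal.toReal_nonneg
      have hreal : a * ψ 1 * M.toReal ≤ ψ ((n : ℝ) + 1) * M.toReal * φ r := by
        have h' : a * ψ 1 ≤ φ r * ψ ((n : ℝ) + 1) :=
          mul_le_mul haφr hψn hψ1.le (ha.le.trans haφr)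
        nlinarith [mul_le_mul_of_nonneg_right h' hMt]
      calc ENNReal.ofReal (a * ψ 1) * M
          = ENNReal.ofReal (a * ψ 1 * M.toReal) := by
            rw [← ENNReal.ofReal_toReal hMne,
              ← ENNReal.ofReal_mul (mul_nonneg ha.le hψ1.le), ENNReal.ofReal_toReal hMne]
        _ ≤ _ := ENNReal.ofReal_le_ofReal hreal
  calc ENNReal.ofReal (a * ψ 1) * eLpNorm f ⊤ μ01
      ≤ ENNReal.ofReal (a * ψ 1) * ∑' n : ℕ, eLpNorm (g n) ⊤ μ01 :=
        mul_le_mul_right h1 _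
    _ = ∑' n : ℕ, ENNReal.ofReal (a * ψ 1) * eLpNorm (g n) ⊤ μ01 := ENNReal.tsum_mul_left.symm
    _ ≤ seqCost φ ψ g := ENNReal.tsum_le_tsum h2

theorem stmt8' {φ ψ : ℝ → ℝ} (hφ : IsPhi φ) (hψ : IsPsi ψ) :
    (∃ K : ℝ, 0 < K ∧ ∀ f : ℝ → ℝ, AEMeasurable f μ01 → QANorm φ ψ f < ⊤ →
      eLpNorm f ⊤ μ01 ≤ ENNReal.ofReal K * QANorm φ ψ f) ↔
    (∃ a : ℝ, 0 < a ∧ ∀ t : ℝ, 0 < t → t ≤ 1 → a ≤ φ t) := by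
  have hψ1 : 0 < ψ 1 := hψ.pos 1 one_pos
  constructor
  · rintro ⟨K, hK, hbound⟩
    by_contra hno
    push_neg at hno
    obtain ⟨t, ht0, ht1, htφ⟩ := hno ((K * ψ 1)⁻¹) (by positivity)
    set f : ℝ → ℝ := (Set.Icc (0:ℝ) t).indicator (fun _ => 1) with hf
    have hfmeas : Measurable f := measurable_const.indicator measurableSet_Icc
    have hf01 : ∀ x, 0 ≤ f x ∧ f x ≤ 1 := fun x => by
      by_cases hx : x ∈ Set.Icc (0:ℝ) t <;>
        simp [hf, Set.indicator_of_mem, Set.indicator_of_notMem, hx]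
    have hMle : eLpNorm f ⊤ μ01 ≤ 1 := by
      rw [eLpNorm_exponent_top]
      have h := eLpNormEssSup_le_of_ae_bound (C := 1) (μ := μ01) (f := f)
        (ae_of_all _ fun x => by
          rw [Real.norm_eq_abs, abs_of_nonneg (hf01 x).1]; exact (hf01 x).2)
      simpa using h
    have hMge : (1:ℝ≥0∞) ≤ eLpNorm f ⊤ μ01 := by
      by_contra hlt
      push_neg at hlt
      have hae := ae_le_eLpNormEssSup (f := f) (μ := μ01)
      have hsub : Set.Icc (0:ℝ) t ⊆
          {x : ℝ | ¬ ((‖f x‖₊ : ℝ≥0∞) ≤ eLpNormEssSup f μ01)} := by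
        intro x hx
        simp only [Set.mem_setOf_eq, not_le]
        have hx1 : f x = 1 := Set.indicator_of_mem hx _
        rw [hx1]
        simpa [eLpNorm_exponent_top] using hlt
      have h0 : μ01 (Set.Icc 0 t) = 0 := measure_mono_null hsub hae
      rw [mu01_Icc ht0 ht1] at h0
      exact absurd h0 (by simp [ht0, ne_of_gt])
    have hM : eLpNorm f ⊤ μ01 = 1 := le_antisymm hMle hMge
    have hL : eLpNorm f 1 μ01 = ENNReal.ofReal t := by
      rw [eLpNorm_one_eq_lintegral_enorm]
      have heq : (fun x => ‖f x‖ₑ) =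
          (Set.Icc (0:ℝ) t).indicator (fun _ => 1) := by
        funext x
        by_cases hx : x ∈ Set.Icc (0:ℝ) t <;> simp [hf, hx]
      rw [heq, lintegral_indicator measurableSet_Icc]
      simp [mu01_Icc ht0 ht1]
    set g : ℕ → ℝ → ℝ := fun n => if n = 0 then f else 0 with hg
    have hadm : Admissible f g := by
      refine ⟨fun n => ?_, fun n => ?_, fun n x => ?_, ae_of_all _ fun x => ?_⟩
      · by_cases hn : n = 0
        · simp only [hg, hn, if_true]; exact hfmeas.aemeasurable
        · simp only [hg, if_neg hn]; exact measurable_const.aemeasurable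
      · by_cases hn : n = 0
        · simp only [hg, hn, if_true]
          rw [hM]; exact one_lt_top
        · simp only [hg, if_neg hn]
          rw [eLpNorm_zero]; exact zero_lt_top
      · by_cases hn : n = 0
        · simp only [hg, hn, if_true]; exact (hf01 x).1
        · simp only [hg, if_neg hn]; exact le_refl _
      · have h0 := ENNReal.le_tsum (f := fun n => ENNReal.ofReal (g n x)) 0
        simpa [hg, abs_of_nonneg (hf01 x).1] using h0
    have hcost : seqCost φ ψ g = ENNReal.ofReal (ψ 1 * φ t) := by
      rw [seqCost, tsum_eq_single 0]
      · simp only [hg, if_true, Nat.cast_zero, zero_add, hM, hL]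
        rw [ENNReal.toReal_one, div_one, ENNReal.toReal_ofReal ht0.le, mul_one]
      · intro n hn
        simp only [hg, if_neg hn, eLpNorm_zero, ENNReal.toReal_zero, mul_zero, zero_mul,
          ENNReal.ofReal_zero]
    have hQle : QANorm φ ψ f ≤ ENNReal.ofReal (ψ 1 * φ t) := by
      rw [← hcost]; exact iInf₂_le g hadm
    have hQfin : QANorm φ ψ f < ⊤ := hQle.trans_lt ofReal_lt_top
    have hb := hbound f hfmeas.aemeasurable hQfin
    rw [hM] at hb
    have h1 : (1:ℝ≥0∞) ≤ ENNReal.ofReal (K * (ψ 1 * φ t)) := by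
      calc (1:ℝ≥0∞) ≤ ENNReal.ofReal K * QANorm φ ψ f := hb
        _ ≤ ENNReal.ofReal K * ENNReal.ofReal (ψ 1 * φ t) := mul_le_mul_right hQle _
        _ = ENNReal.ofReal (K * (ψ 1 * φ t)) := (ENNReal.ofReal_mul hK.le).symm
    rw [ENNReal.one_le_ofReal] at h1
    have hφt : 0 < φ t := hφ.pos t ht0 ht1
    have hlt : K * (ψ 1 * φ t) < 1 := by
      have hKψ : 0 < K * ψ 1 := by positivity
      have := mul_lt_mul_of_pos_left htφ hKψ
      rw [mul_inv_cancel₀ hKψ.ne'] at this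
      nlinarith
    linarith
  · rintro ⟨a, ha, haφ⟩
    refine ⟨(a * ψ 1)⁻¹, by positivity, fun f hf hQ => ?_⟩
    have hc : ENNReal.ofReal (a * ψ 1) * eLpNorm f ⊤ μ01 ≤ QANorm φ ψ f :=
      le_iInf₂ fun g hg => cost_lower hφ hψ ha haφ f g hg
    have hc0 : ENNReal.ofReal (a * ψ 1) ≠ 0 := (ENNReal.ofReal_pos.2 (by positivity)).ne'
    have hcT : ENNReal.ofReal (a * ψ 1) ≠ ⊤ := ENNReal.ofReal_ne_top
    rw [ENNReal.ofReal_inv_of_pos (by positivity : (0:ℝ) < a * ψ 1)]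
    calc eLpNorm f ⊤ μ01
        = (ENNReal.ofReal (a * ψ 1))⁻¹ * (ENNReal.ofReal (a * ψ 1) * eLpNorm f ⊤ μ01) := by
          rw [← mul_assoc, ENNReal.inv_mul_cancel hc0 hcT, one_mul]
      _ ≤ (ENNReal.ofReal (a * ψ 1))⁻¹ * QANorm φ ψ f := mul_le_mul_right hc _

/-- `QA_{φ,ψ} = L^∞` (i.e. the reverse embedding
`‖f‖_∞ ≤ K ‖f‖_{φ,ψ}` holds on `QA_{φ,ψ}`) if and only if `φ(0⁺) > 0`. -/
theorem stmt8 {φ ψ : ℝ → ℝ} (hφ : IsPhi φ) (hψ : IsPsi ψ) :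
    (∃ K : ℝ, 0 < K ∧ ∀ f : ℝ → ℝ, AEMeasurable f μ01 → QANorm φ ψ f < ⊤ →
      eLpNorm f ⊤ μ01 ≤ ENNReal.ofReal K * QANorm φ ψ f) ↔
    (∃ a : ℝ, 0 < a ∧ ∀ t : ℝ, 0 < t → t ≤ 1 → a ≤ φ t) := by
  exact stmt8' hφ hψ
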